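/- For every integer q ≥ 2 and every δ with 0 < δ ≤ 1/q, the squared Hellinger distance between the two-point distributions p⁺ = (1 - 1/q + δ, 1/q - δ) and p⁻ = (1 - 1/q - δ, 1/q + δ), given by d_H²(p⁺,p⁻) = 1 - √((1-1/q)² - δ²) - √((1/q)² - δ²), satisfies d_H²(p⁺,p⁻) ≤ q²δ²/(q-1). -/

import Mathlib

lemma sqrt_lb (x δ : ℝ) (hx : 0 < x) (hδ : 0 < δ) (h : δ ≤ x) :
    x - δ ^ 2 / x ≤ Real.sqrt (x ^ 2 - δ ^ 2) := by
  have h0 : 0 ≤ x - δ ^ 2 / x := by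
    rw [sub_nonneg, div_le_iff₀ hx]
    nlinarith
  rw [Real.le_sqrt h0 (by nlinarith)]
  have hx2 : δ ^ 2 / x ≤ δ := by rw [div_le_iff₀ hx]; nlinarith
  have hm : x * (δ ^ 2 / x) = δ ^ 2 := by field_simp
  nlinarith [sq_nonneg (δ ^ 2 / x), hx2, hm, hδ.le]

theorem hellinger_sq_le (q : ℕ) (hq : 2 ≤ q) (δ : ℝ) (hδ : 0 < δ) (hδq : δ ≤ 1 / q) :
    1 - Real.sqrt ((1 - 1 / (q : ℝ)) ^ 2 - δ ^ 2) - Real.sqrt ((1 / (q : ℝ)) ^ 2 - δ ^ 2) ≤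
      (q : ℝ) ^ 2 * δ ^ 2 / ((q : ℝ) - 1) := by
  have hq2 : (2 : ℝ) ≤ (q : ℝ) := by exact_mod_cast hq
  have hqpos : (0 : ℝ) < q := by linarith
  have hb : (0 : ℝ) < 1 / q := by positivity
  have ha : (0 : ℝ) < 1 - 1 / (q : ℝ) := by
    rw [sub_pos, div_lt_one hqpos]; linarith
  have hδa : δ ≤ 1 - 1 / (q : ℝ) := by
    have : 1 / (q : ℝ) ≤ 1 - 1 / q := by
      rw [le_sub_iff_add_le, ← add_div, div_le_one hqpos]; linarith
    linarith
  have h1 := sqrt_lb (1 - 1 / (q : ℝ)) δ ha hδ hδa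
  have h2 := sqrt_lb (1 / (q : ℝ)) δ hb hδ hδq
  have hq1 : (q : ℝ) - 1 ≠ 0 := by intro h; nlinarith
  have hqne : (q : ℝ) ≠ 0 := ne_of_gt hqpos
  have key : 1 - (1 - 1 / (q : ℝ) - δ ^ 2 / (1 - 1 / q)) - (1 / (q : ℝ) - δ ^ 2 / (1 / q)) =
      (q : ℝ) ^ 2 * δ ^ 2 / ((q : ℝ) - 1) := by
    field_simp
    ring
  linarith
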